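/- arXiv:1409.5834 — 4 statements merged into one kernel-verified Lean document; each statement's English description precedes it below -/
import Mathlib

section
/- Let Ŷ ∈ {−1,+1}^V maximize Σ_{uv∈E} X_uv·Y_u·Y_v over all Y ∈ {−1,+1}^V on the n×n grid graph, let B = {v ∈ V : Ŷ_v ≠ y_v}, and suppose no connected component of G[B] is of type 6. Then for every connected component B_i of G[B], every filled-in set F(B_i) is bad, i.e. at least half of the edges of δ(F(B_i)) satisfy X_e ≠ y_u·y_v. -/
open Finset

def IsSign (x : ℤ) : Prop := x = 1 ∨ x = -1

def gridGraph (n : ℕ) : SimpleGraph (Fin n × Fin n) where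
  Adj u v := (u.1 = v.1 ∧ Nat.dist u.2.val v.2.val = 1) ∨
    (u.2 = v.2 ∧ Nat.dist u.1.val v.1.val = 1)
  symm := by
    constructor
    intro u v h
    rcases h with ⟨h1, h2⟩ | ⟨h1, h2⟩
    · exact Or.inl ⟨h1.symm, by rwa [Nat.dist_comm]⟩
    · exact Or.inr ⟨h1.symm, by rwa [Nat.dist_comm]⟩
  loopless := by
    constructor
    intro u h
    rcases h with ⟨_, h2⟩ | ⟨_, h2⟩ <;> simp [Nat.dist_self] at h2

instance (n : ℕ) : DecidableRel (gridGraph n).Adj := fun u v =>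
  inferInstanceAs (Decidable ((u.1 = v.1 ∧ Nat.dist u.2.val v.2.val = 1) ∨
    (u.2 = v.2 ∧ Nat.dist u.1.val v.1.val = 1)))

def pairProd {V : Type*} (y : V → ℤ) : Sym2 V → ℤ :=
  Sym2.lift ⟨fun u v => y u * y v, fun u v => mul_comm (y u) (y v)⟩

/-- The boundary `δ(S)`: edges of `G` with exactly one endpoint in `S`. -/
def bdry {V : Type*} [Fintype V] [DecidableEq V] (G : SimpleGraph V) [DecidableRel G.Adj]
    (S : Finset V) : Finset (Sym2 V) :=
  G.edgeFinset.filter fun e => ∃ u v : V, e = s(u, v) ∧ u ∈ S ∧ v ∉ S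

def Maximizes {V : Type*} [Fintype V] [DecidableEq V] (G : SimpleGraph V)
    [DecidableRel G.Adj] (X : Sym2 V → ℤ) (Yh : V → ℤ) : Prop :=
  (∀ v, IsSign (Yh v)) ∧
  ∀ Y : V → ℤ, (∀ v, IsSign (Y v)) →
    (∑ e ∈ G.edgeFinset, X e * pairProd Y e) ≤ ∑ e ∈ G.edgeFinset, X e * pairProd Yh e

def Type6 (n : ℕ) (S : Finset (Fin n × Fin n)) : Prop :=
  (∃ v ∈ S, v.1.val = 0) ∧ (∃ v ∈ S, v.1.val = n - 1) ∧
  (∃ v ∈ S, v.2.val = 0) ∧ (∃ v ∈ S, v.2.val = n - 1)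

def sideCount (n : ℕ) (S : Finset (Fin n × Fin n)) : ℕ :=
  (if ∃ v ∈ S, v.1.val = 0 then 1 else 0) + (if ∃ v ∈ S, v.1.val = n - 1 then 1 else 0) +
  (if ∃ v ∈ S, v.2.val = 0 then 1 else 0) + (if ∃ v ∈ S, v.2.val = n - 1 then 1 else 0)

def ThreeSided (n : ℕ) (S : Finset (Fin n × Fin n)) : Prop := 3 ≤ sideCount n S

def IsCompOf {V : Type*} [Fintype V] [DecidableEq V] (G : SimpleGraph V)
    (C W : Finset V) : Prop :=
  C ⊆ W ∧ (G.induce (C : Set V)).Connected ∧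
  ∀ u ∈ C, ∀ v ∈ W, G.Adj u v → v ∈ C

def IsFilledIn (n : ℕ) (S F : Finset (Fin n × Fin n)) : Prop :=
  ∃ C, IsCompOf (gridGraph n) C Sᶜ ∧ ThreeSided n C ∧ F = S ∪ (Sᶜ \ C)

/-- if `Ŷ` maximizes the edge agreement on the `n × n` grid, `B` is the set
of mislabeled vertices, and no connected component of `G[B]` is of type 6, then for every
connected component `Bᵢ` of `G[B]`, every filled-in set `F(Bᵢ)` is bad: at least half of
the edges of `δ(F(Bᵢ))` are inconsistent with the ground truth. -/
theorem filledIn_of_mislabeled_component_is_bad (n : ℕ)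
    (y : Fin n × Fin n → ℤ) (hy : ∀ v, IsSign (y v))
    (X : Sym2 (Fin n × Fin n) → ℤ) (hX : ∀ e ∈ (gridGraph n).edgeFinset, IsSign (X e))
    (Yh : Fin n × Fin n → ℤ) (hmax : Maximizes (gridGraph n) X Yh)
    (B : Finset (Fin n × Fin n)) (hB : B = univ.filter fun v => Yh v ≠ y v)
    (hno6 : ∀ C, IsCompOf (gridGraph n) C B → ¬ Type6 n C) :
    ∀ Bi, IsCompOf (gridGraph n) Bi B →
    ∀ F, IsFilledIn n Bi F →
      (bdry (gridGraph n) F).card ≤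
        2 * ((bdry (gridGraph n) F).filter fun e => X e ≠ pairProd y e).card := by
  intro Bi hBi F hF
  classical
  obtain ⟨C, hC, -, hFdef⟩ := hF
  have hstruct : ∀ u v : Fin n × Fin n, (gridGraph n).Adj u v → u ∈ F → v ∉ F →
      u ∈ B ∧ v ∉ B := by
    intro u v hadj hu hv
    have hvBi : v ∉ Bi := fun h => hv (hFdef ▸ Finset.mem_union_left _ h)
    have hvC : v ∈ C := by
      by_contra hvC
      exact hv (hFdef ▸ Finset.mem_union_right _
        (Finset.mem_sdiff.mpr ⟨Finset.mem_compl.mpr hvBi, hvC⟩))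
    have huBi : u ∈ Bi := by
      rcases Finset.mem_union.mp (hFdef ▸ hu) with h | h
      · exact h
      · exfalso
        obtain ⟨huc, hunC⟩ := Finset.mem_sdiff.mp h
        exact hunC (hC.2.2 v hvC u huc hadj.symm)
    refine ⟨hBi.1 huBi, fun hvB => ?_⟩
    exact hvBi (hBi.2.2 u huBi v hvB hadj)
  have hsignval : ∀ u v : Fin n × Fin n, u ∈ B → v ∉ B → Yh u * Yh v = -(y u * y v) := by
    intro u v hu hv
    have hu' : Yh u ≠ y u := by
      rw [hB] at hu; exact (Finset.mem_filter.mp hu).2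
    have hv' : Yh v = y v := by
      by_contra h
      exact hv (hB ▸ Finset.mem_filter.mpr ⟨Finset.mem_univ _, h⟩)
    have huu : Yh u = -y u := by
      rcases hmax.1 u with h1 | h1 <;> rcases hy u with h2 | h2 <;> simp_all <;> omega
    rw [huu, hv']; ring
  set G := gridGraph n
  set Y' : Fin n × Fin n → ℤ := fun w => if w ∈ F then -Yh w else Yh w with hY'
  have hY'sign : ∀ v, IsSign (Y' v) := by
    intro v
    by_cases hvF : v ∈ F <;> rcases hmax.1 v with h | h <;>
      simp [hY', hvF, h, IsSign]
  have hle := hmax.2 Y' hY'sign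
  have hpt : ∀ e ∈ G.edgeFinset,
      X e * pairProd Yh e - X e * pairProd Y' e =
        if ∃ u v : Fin n × Fin n, e = s(u, v) ∧ u ∈ F ∧ v ∉ F then
          2 * (X e * pairProd Yh e) else 0 := by
    intro e he
    induction e using Sym2.ind with
    | _ u v =>
      have hP : (∃ a b : Fin n × Fin n, s(u, v) = s(a, b) ∧ a ∈ F ∧ b ∉ F) ↔
          ((u ∈ F ∧ v ∉ F) ∨ (v ∈ F ∧ u ∉ F)) := by
        constructor
        · rintro ⟨a, b, hab, ha, hb⟩
          rcases Sym2.eq_iff.mp hab with ⟨rfl, rfl⟩ | ⟨rfl, rfl⟩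
          · exact Or.inl ⟨ha, hb⟩
          · exact Or.inr ⟨ha, hb⟩
        · rintro (⟨h1, h2⟩ | ⟨h1, h2⟩)
          · exact ⟨u, v, rfl, h1, h2⟩
          · exact ⟨v, u, Sym2.eq_swap, h1, h2⟩
      simp only [pairProd, Sym2.lift_mk, hY', hP]
      by_cases hu : u ∈ F <;> by_cases hv : v ∈ F <;>
        simp [hu, hv] <;> ring
  have hsum : ∑ e ∈ G.edgeFinset, X e * pairProd Yh e
      - ∑ e ∈ G.edgeFinset, X e * pairProd Y' e
      = ∑ e ∈ bdry G F, 2 * (X e * pairProd Yh e) := by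
    rw [← Finset.sum_sub_distrib, bdry, Finset.sum_filter]
    exact Finset.sum_congr rfl hpt
  have hnonneg : 0 ≤ ∑ e ∈ bdry G F, X e * pairProd Yh e := by
    have h0 : 0 ≤ ∑ e ∈ bdry G F, 2 * (X e * pairProd Yh e) := by
      rw [← hsum]; linarith
    rw [← Finset.mul_sum] at h0
    linarith
  have hchar : ∀ e ∈ bdry G F,
      (X e * pairProd Yh e = 1 ∨ X e * pairProd Yh e = -1) ∧
      (X e * pairProd Yh e = 1 ↔ X e ≠ pairProd y e) := by
    intro e he
    have he' := Finset.mem_filter.mp he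
    obtain ⟨u, v, heq, hu, hv⟩ := he'.2
    have heE := he'.1
    subst heq
    have hadj : G.Adj u v := by
      rw [SimpleGraph.mem_edgeFinset, SimpleGraph.mem_edgeSet] at heE; exact heE
    obtain ⟨huB, hvB⟩ := hstruct u v hadj hu hv
    have hprod : Yh u * Yh v = -(y u * y v) := hsignval u v huB hvB
    rcases hX _ heE with hx | hx <;>
      rcases hy u with h1 | h1 <;> rcases hy v with h2 | h2 <;>
      norm_num [pairProd, hx, hprod, h1, h2]
  set T := bdry G F with hT
  set T1 := T.filter fun e => X e * pairProd Yh e = 1 with hT1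
  have hsum2 : ∑ e ∈ T, X e * pairProd Yh e
      = (T1.card : ℤ) - ((T.card : ℤ) - T1.card) := by
    rw [← Finset.sum_filter_add_sum_filter_not T (fun e => X e * pairProd Yh e = 1)]
    have e1 : ∑ e ∈ T1, X e * pairProd Yh e = (T1.card : ℤ) := by
      rw [Finset.sum_congr rfl (fun e he => (Finset.mem_filter.mp he).2)]
      simp
      rfl
    have e2 : ∑ e ∈ T.filter (fun e => ¬ X e * pairProd Yh e = 1), X e * pairProd Yh e
        = -(((T.filter (fun e => ¬ X e * pairProd Yh e = 1)).card : ℤ)) := by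
      have hval : ∀ e ∈ T.filter (fun e => ¬ X e * pairProd Yh e = 1),
          X e * pairProd Yh e = -1 := by
        intro e he
        obtain ⟨heT, hne⟩ := Finset.mem_filter.mp he
        rcases (hchar e heT).1 with h | h
        · exact absurd h hne
        · exact h
      rw [Finset.sum_congr rfl hval]
      simp
    rw [e1, e2, Finset.filter_not, Finset.card_sdiff_of_subset (Finset.filter_subset _ _)]
    simp only [← hT1]
    have hle1 : T1.card ≤ T.card := hT1 ▸ Finset.card_filter_le _ _
    push_cast [Nat.cast_sub hle1]
    ring
  have hcard : T.card ≤ 2 * T1.card := by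
    rw [hsum2] at hnonneg
    omega
  have hfeq : T1 = T.filter fun e => X e ≠ pairProd y e := by
    apply Finset.filter_congr
    intro e he
    simpa using (hchar e he).2
  rw [hfeq] at hcard
  exact hcard
end

section
/- Let F ⊆ V be a nonempty subset of the n×n grid graph such that G[F] is connected, G[V∖F] is connected and nonempty, and F contains no vertex of the grid perimeter. Then |F| ≤ |δ(F)|² / 16. -/
open Finset

lemma mem_bdry' {V : Type*} [Fintype V] [DecidableEq V] (G : SimpleGraph V)
    [DecidableRel G.Adj] {S : Finset V} {u v : V} (hadj : G.Adj u v)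
    (hu : u ∈ S) (hv : v ∉ S) : s(u, v) ∈ bdry G S := by
  unfold bdry
  rw [Finset.mem_filter, SimpleGraph.mem_edgeFinset, SimpleGraph.mem_edgeSet]
  exact ⟨hadj, u, v, rfl, hu, hv⟩

/-- a nonempty set `F` with `G[F]` connected, `G[V∖F]` connected and
nonempty, containing no perimeter vertex, satisfies `|F| ≤ |δ(F)|²/16`. -/
theorem type1_area_le_boundary_sq_div16 (n : ℕ) (F : Finset (Fin n × Fin n))
    (hne : F.Nonempty)
    (hconn : ((gridGraph n).induce (F : Set (Fin n × Fin n))).Connected)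
    (hconnc : ((gridGraph n).induce ((↑F : Set (Fin n × Fin n))ᶜ)).Connected)
    (hcne : Fᶜ.Nonempty)
    (hper : ∀ v ∈ F, v.1.val ≠ 0 ∧ v.1.val ≠ n - 1 ∧ v.2.val ≠ 0 ∧ v.2.val ≠ n - 1) :
    16 * F.card ≤ (bdry (gridGraph n) F).card ^ 2 := by
  classical
  obtain ⟨p₀, hp₀⟩ := hne
  have hn3 : 3 ≤ n := by
    obtain ⟨h1, h2, -, -⟩ := hper p₀ hp₀
    have := p₀.1.isLt
    omega
  set A : Finset (Fin n) := F.image Prod.fst with hA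
  set B : Finset (Fin n) := F.image Prod.snd with hB
  -- Step 1 : |F| ≤ |A| * |B|
  have hcard : F.card ≤ A.card * B.card := by
    rw [← Finset.card_product]
    apply Finset.card_le_card
    intro p hp
    exact Finset.mem_product.2 ⟨Finset.mem_image_of_mem _ hp, Finset.mem_image_of_mem _ hp⟩
  -- Existence of directional boundary edges
  have colTop : ∀ x ∈ A, ∃ u v : Fin n × Fin n, u ∈ F ∧ v ∉ F ∧ u.1 = x ∧ v.1 = x ∧
      v.2.val = u.2.val + 1 ∧ (gridGraph n).Adj u v := by
    intro x hx
    obtain ⟨p, hpF, hpx⟩ := Finset.mem_image.1 hx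
    set S : Finset (Fin n) := (F.filter fun q => q.1 = x).image Prod.snd with hS
    have hSne : S.Nonempty := ⟨p.2, Finset.mem_image.2 ⟨p, Finset.mem_filter.2 ⟨hpF, hpx⟩, rfl⟩⟩
    set t : Fin n := S.max' hSne with htdef
    have htS : t ∈ S := S.max'_mem hSne
    obtain ⟨q, hqf, hq2⟩ := Finset.mem_image.1 htS
    obtain ⟨hqF, hqx⟩ := Finset.mem_filter.1 hqf
    have hqeq : q = (x, t) := Prod.ext hqx hq2
    rw [hqeq] at hqF
    have hmax : ∀ y : Fin n, (x, y) ∈ F → y ≤ t := by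
      intro y hy
      exact S.le_max' y (Finset.mem_image.2 ⟨(x, y), Finset.mem_filter.2 ⟨hy, rfl⟩, rfl⟩)
    have htn : t.val + 1 < n := by
      obtain ⟨-, -, -, h4⟩ := hper (x, t) hqF
      have h4' : t.val ≠ n - 1 := h4
      have := t.isLt; omega
    refine ⟨(x, t), (x, ⟨t.val + 1, htn⟩), hqF, ?_, rfl, rfl, rfl, ?_⟩
    · intro h
      have := hmax _ h
      rw [Fin.le_def] at this
      simp at this
    · exact Or.inl ⟨rfl, by simp [Nat.dist]⟩
  have colBot : ∀ x ∈ A, ∃ u v : Fin n × Fin n, u ∈ F ∧ v ∉ F ∧ u.1 = x ∧ v.1 = x ∧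
      u.2.val = v.2.val + 1 ∧ (gridGraph n).Adj u v := by
    intro x hx
    obtain ⟨p, hpF, hpx⟩ := Finset.mem_image.1 hx
    set S : Finset (Fin n) := (F.filter fun q => q.1 = x).image Prod.snd with hS
    have hSne : S.Nonempty := ⟨p.2, Finset.mem_image.2 ⟨p, Finset.mem_filter.2 ⟨hpF, hpx⟩, rfl⟩⟩
    set t : Fin n := S.min' hSne with htdef
    have htS : t ∈ S := S.min'_mem hSne
    obtain ⟨q, hqf, hq2⟩ := Finset.mem_image.1 htS
    obtain ⟨hqF, hqx⟩ := Finset.mem_filter.1 hqf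
    have hqeq : q = (x, t) := Prod.ext hqx hq2
    rw [hqeq] at hqF
    have hmin : ∀ y : Fin n, (x, y) ∈ F → t ≤ y := by
      intro y hy
      exact S.min'_le y (Finset.mem_image.2 ⟨(x, y), Finset.mem_filter.2 ⟨hy, rfl⟩, rfl⟩)
    have ht0 : t.val ≠ 0 := (hper (x, t) hqF).2.2.1
    refine ⟨(x, t), (x, ⟨t.val - 1, by have := t.isLt; omega⟩), hqF, ?_, rfl, rfl,
      by simp; omega, ?_⟩
    · intro h
      have := hmin _ h
      rw [Fin.le_def] at this
      simp at this
      omega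
    · exact Or.inl ⟨rfl, by simp [Nat.dist]; omega⟩
  have rowRight : ∀ y ∈ B, ∃ u v : Fin n × Fin n, u ∈ F ∧ v ∉ F ∧ u.2 = y ∧ v.2 = y ∧
      v.1.val = u.1.val + 1 ∧ (gridGraph n).Adj u v := by
    intro y hy
    obtain ⟨p, hpF, hpy⟩ := Finset.mem_image.1 hy
    set S : Finset (Fin n) := (F.filter fun q => q.2 = y).image Prod.fst with hS
    have hSne : S.Nonempty := ⟨p.1, Finset.mem_image.2 ⟨p, Finset.mem_filter.2 ⟨hpF, hpy⟩, rfl⟩⟩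
    set t : Fin n := S.max' hSne with htdef
    have htS : t ∈ S := S.max'_mem hSne
    obtain ⟨q, hqf, hq1⟩ := Finset.mem_image.1 htS
    obtain ⟨hqF, hqy⟩ := Finset.mem_filter.1 hqf
    have hqeq : q = (t, y) := Prod.ext hq1 hqy
    rw [hqeq] at hqF
    have hmax : ∀ x : Fin n, (x, y) ∈ F → x ≤ t := by
      intro x hx
      exact S.le_max' x (Finset.mem_image.2 ⟨(x, y), Finset.mem_filter.2 ⟨hx, rfl⟩, rfl⟩)
    have htn : t.val + 1 < n := by
      obtain ⟨-, h2, -, -⟩ := hper (t, y) hqF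
      have h2' : t.val ≠ n - 1 := h2
      have := t.isLt; omega
    refine ⟨(t, y), (⟨t.val + 1, htn⟩, y), hqF, ?_, rfl, rfl, rfl, ?_⟩
    · intro h
      have := hmax _ h
      rw [Fin.le_def] at this
      simp at this
    · exact Or.inr ⟨rfl, by simp [Nat.dist]⟩
  have rowLeft : ∀ y ∈ B, ∃ u v : Fin n × Fin n, u ∈ F ∧ v ∉ F ∧ u.2 = y ∧ v.2 = y ∧
      u.1.val = v.1.val + 1 ∧ (gridGraph n).Adj u v := by
    intro y hy
    obtain ⟨p, hpF, hpy⟩ := Finset.mem_image.1 hy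
    set S : Finset (Fin n) := (F.filter fun q => q.2 = y).image Prod.fst with hS
    have hSne : S.Nonempty := ⟨p.1, Finset.mem_image.2 ⟨p, Finset.mem_filter.2 ⟨hpF, hpy⟩, rfl⟩⟩
    set t : Fin n := S.min' hSne with htdef
    have htS : t ∈ S := S.min'_mem hSne
    obtain ⟨q, hqf, hq1⟩ := Finset.mem_image.1 htS
    obtain ⟨hqF, hqy⟩ := Finset.mem_filter.1 hqf
    have hqeq : q = (t, y) := Prod.ext hq1 hqy
    rw [hqeq] at hqF
    have hmin : ∀ x : Fin n, (x, y) ∈ F → t ≤ x := by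
      intro x hx
      exact S.min'_le x (Finset.mem_image.2 ⟨(x, y), Finset.mem_filter.2 ⟨hx, rfl⟩, rfl⟩)
    have ht0 : t.val ≠ 0 := (hper (t, y) hqF).1
    refine ⟨(t, y), (⟨t.val - 1, by have := t.isLt; omega⟩, y), hqF, ?_, rfl, rfl,
      by simp; omega, ?_⟩
    · intro h
      have := hmin _ h
      rw [Fin.le_def] at this
      simp at this
      omega
    · exact Or.inr ⟨rfl, by simp [Nat.dist]; omega⟩
  choose uT vT hT using colTop
  choose uB vB hBo using colBot
  choose uR vR hR using rowRight
  choose uL vL hL using rowLeft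
  set ET : Finset (Sym2 (Fin n × Fin n)) := A.attach.image (fun x => s(uT x.1 x.2, vT x.1 x.2))
    with hET
  set EB : Finset (Sym2 (Fin n × Fin n)) := A.attach.image (fun x => s(uB x.1 x.2, vB x.1 x.2))
    with hEB
  set ER : Finset (Sym2 (Fin n × Fin n)) := B.attach.image (fun y => s(uR y.1 y.2, vR y.1 y.2))
    with hER
  set EL : Finset (Sym2 (Fin n × Fin n)) := B.attach.image (fun y => s(uL y.1 y.2, vL y.1 y.2))
    with hEL
  -- all edges are in the boundary
  have hsub : ET ∪ EB ∪ (ER ∪ EL) ⊆ bdry (gridGraph n) F := by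
    intro e he
    simp only [hET, hEB, hER, hEL, Finset.mem_union, Finset.mem_image] at he
    rcases he with (⟨x, -, rfl⟩ | ⟨x, -, rfl⟩) | (⟨y, -, rfl⟩ | ⟨y, -, rfl⟩)
    · obtain ⟨h1, h2, -, -, -, h6⟩ := hT x.1 x.2; exact mem_bdry' _ h6 h1 h2
    · obtain ⟨h1, h2, -, -, -, h6⟩ := hBo x.1 x.2; exact mem_bdry' _ h6 h1 h2
    · obtain ⟨h1, h2, -, -, -, h6⟩ := hR y.1 y.2; exact mem_bdry' _ h6 h1 h2
    · obtain ⟨h1, h2, -, -, -, h6⟩ := hL y.1 y.2; exact mem_bdry' _ h6 h1 h2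
  -- cardinalities
  have cardET : ET.card = A.card := by
    have hinj : Set.InjOn (fun x : {x // x ∈ A} => s(uT x.1 x.2, vT x.1 x.2)) ↑A.attach := by
      intro x hx y hy h
      simp only [Sym2.eq_iff] at h
      obtain ⟨-, -, hu3, hu4, -, -⟩ := hT x.1 x.2
      obtain ⟨-, -, hv3, hv4, -, -⟩ := hT y.1 y.2
      apply Subtype.ext
      rcases h with ⟨h1, -⟩ | ⟨h1, -⟩
      · rw [← hu3, h1, hv3]
      · rw [← hu3, h1, hv4]
    rw [hET, Finset.card_image_of_injOn hinj, Finset.card_attach]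
  have cardEB : EB.card = A.card := by
    have hinj : Set.InjOn (fun x : {x // x ∈ A} => s(uB x.1 x.2, vB x.1 x.2)) ↑A.attach := by
      intro x hx y hy h
      simp only [Sym2.eq_iff] at h
      obtain ⟨-, -, hu3, hu4, -, -⟩ := hBo x.1 x.2
      obtain ⟨-, -, hv3, hv4, -, -⟩ := hBo y.1 y.2
      apply Subtype.ext
      rcases h with ⟨h1, -⟩ | ⟨h1, -⟩
      · rw [← hu3, h1, hv3]
      · rw [← hu3, h1, hv4]
    rw [hEB, Finset.card_image_of_injOn hinj, Finset.card_attach]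
  have cardER : ER.card = B.card := by
    have hinj : Set.InjOn (fun x : {x // x ∈ B} => s(uR x.1 x.2, vR x.1 x.2)) ↑B.attach := by
      intro x hx y hy h
      simp only [Sym2.eq_iff] at h
      obtain ⟨-, -, hu3, hu4, -, -⟩ := hR x.1 x.2
      obtain ⟨-, -, hv3, hv4, -, -⟩ := hR y.1 y.2
      apply Subtype.ext
      rcases h with ⟨h1, -⟩ | ⟨h1, -⟩
      · rw [← hu3, h1, hv3]
      · rw [← hu3, h1, hv4]
    rw [hER, Finset.card_image_of_injOn hinj, Finset.card_attach]
  have cardEL : EL.card = B.card := by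
    have hinj : Set.InjOn (fun x : {x // x ∈ B} => s(uL x.1 x.2, vL x.1 x.2)) ↑B.attach := by
      intro x hx y hy h
      simp only [Sym2.eq_iff] at h
      obtain ⟨-, -, hu3, hu4, -, -⟩ := hL x.1 x.2
      obtain ⟨-, -, hv3, hv4, -, -⟩ := hL y.1 y.2
      apply Subtype.ext
      rcases h with ⟨h1, -⟩ | ⟨h1, -⟩
      · rw [← hu3, h1, hv3]
      · rw [← hu3, h1, hv4]
    rw [hEL, Finset.card_image_of_injOn hinj, Finset.card_attach]
  -- disjointness
  have dTB : Disjoint ET EB := by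
    rw [Finset.disjoint_left]
    rintro e he1 he2
    simp only [hET, hEB, Finset.mem_image] at he1 he2
    obtain ⟨x, -, rfl⟩ := he1
    obtain ⟨y, -, heq⟩ := he2
    rw [Sym2.eq_iff] at heq
    obtain ⟨huF, hvF, -, -, h5, -⟩ := hT x.1 x.2
    obtain ⟨-, hv'F, -, -, h5', -⟩ := hBo y.1 y.2
    rcases heq with ⟨h1, h2⟩ | ⟨h1, h2⟩
    · rw [h1, h2] at h5'; omega
    · exact hv'F (by rw [h2]; exact huF)
  have dTR : Disjoint ET ER := by
    rw [Finset.disjoint_left]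
    rintro e he1 he2
    simp only [hET, hER, Finset.mem_image] at he1 he2
    obtain ⟨x, -, rfl⟩ := he1
    obtain ⟨y, -, heq⟩ := he2
    rw [Sym2.eq_iff] at heq
    obtain ⟨huF, hvF, h3, h4, -, -⟩ := hT x.1 x.2
    obtain ⟨-, hv'F, -, -, h5', -⟩ := hR y.1 y.2
    rcases heq with ⟨h1, h2⟩ | ⟨h1, h2⟩
    · rw [h1, h2] at h5'
      have : (uT x.1 x.2).1.val = (vT x.1 x.2).1.val := by rw [h3, h4]
      omega
    · exact hv'F (by rw [h2]; exact huF)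
  have dTL : Disjoint ET EL := by
    rw [Finset.disjoint_left]
    rintro e he1 he2
    simp only [hET, hEL, Finset.mem_image] at he1 he2
    obtain ⟨x, -, rfl⟩ := he1
    obtain ⟨y, -, heq⟩ := he2
    rw [Sym2.eq_iff] at heq
    obtain ⟨huF, hvF, h3, h4, -, -⟩ := hT x.1 x.2
    obtain ⟨-, hv'F, -, -, h5', -⟩ := hL y.1 y.2
    rcases heq with ⟨h1, h2⟩ | ⟨h1, h2⟩
    · rw [h1, h2] at h5'
      have : (uT x.1 x.2).1.val = (vT x.1 x.2).1.val := by rw [h3, h4]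
      omega
    · exact hv'F (by rw [h2]; exact huF)
  have dBR : Disjoint EB ER := by
    rw [Finset.disjoint_left]
    rintro e he1 he2
    simp only [hEB, hER, Finset.mem_image] at he1 he2
    obtain ⟨x, -, rfl⟩ := he1
    obtain ⟨y, -, heq⟩ := he2
    rw [Sym2.eq_iff] at heq
    obtain ⟨huF, hvF, h3, h4, -, -⟩ := hBo x.1 x.2
    obtain ⟨-, hv'F, -, -, h5', -⟩ := hR y.1 y.2
    rcases heq with ⟨h1, h2⟩ | ⟨h1, h2⟩
    · rw [h1, h2] at h5'
      have : (uB x.1 x.2).1.val = (vB x.1 x.2).1.val := by rw [h3, h4]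
      omega
    · exact hv'F (by rw [h2]; exact huF)
  have dBL : Disjoint EB EL := by
    rw [Finset.disjoint_left]
    rintro e he1 he2
    simp only [hEB, hEL, Finset.mem_image] at he1 he2
    obtain ⟨x, -, rfl⟩ := he1
    obtain ⟨y, -, heq⟩ := he2
    rw [Sym2.eq_iff] at heq
    obtain ⟨huF, hvF, h3, h4, -, -⟩ := hBo x.1 x.2
    obtain ⟨-, hv'F, -, -, h5', -⟩ := hL y.1 y.2
    rcases heq with ⟨h1, h2⟩ | ⟨h1, h2⟩
    · rw [h1, h2] at h5'
      have : (uB x.1 x.2).1.val = (vB x.1 x.2).1.val := by rw [h3, h4]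
      omega
    · exact hv'F (by rw [h2]; exact huF)
  have dRL : Disjoint ER EL := by
    rw [Finset.disjoint_left]
    rintro e he1 he2
    simp only [hER, hEL, Finset.mem_image] at he1 he2
    obtain ⟨x, -, rfl⟩ := he1
    obtain ⟨y, -, heq⟩ := he2
    rw [Sym2.eq_iff] at heq
    obtain ⟨huF, hvF, -, -, h5, -⟩ := hR x.1 x.2
    obtain ⟨-, hv'F, -, -, h5', -⟩ := hL y.1 y.2
    rcases heq with ⟨h1, h2⟩ | ⟨h1, h2⟩
    · rw [h1, h2] at h5'; omega
    · exact hv'F (by rw [h2]; exact huF)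
  have cardU : (ET ∪ EB ∪ (ER ∪ EL)).card = A.card + A.card + (B.card + B.card) := by
    rw [Finset.card_union_of_disjoint, Finset.card_union_of_disjoint dTB,
      Finset.card_union_of_disjoint dRL, cardET, cardEB, cardER, cardEL]
    exact Finset.disjoint_union_right.2 ⟨Finset.disjoint_union_left.2 ⟨dTR, dBR⟩,
      Finset.disjoint_union_left.2 ⟨dTL, dBL⟩⟩
  have hbd : A.card + A.card + (B.card + B.card) ≤ (bdry (gridGraph n) F).card := by
    rw [← cardU]; exact Finset.card_le_card hsub
  have key : 16 * (A.card * B.card) ≤ (A.card + A.card + (B.card + B.card)) ^ 2 := by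
    zify
    nlinarith [sq_nonneg ((A.card : ℤ) - B.card)]
  calc 16 * F.card ≤ 16 * (A.card * B.card) := by
        exact Nat.mul_le_mul_left _ hcard
    _ ≤ (A.card + A.card + (B.card + B.card)) ^ 2 := key
    _ ≤ (bdry (gridGraph n) F).card ^ 2 := Nat.pow_le_pow_left hbd 2
end

section
/- Let F ⊆ V be a nonempty subset of the n×n grid graph such that G[F] is connected, G[V∖F] is connected and nonempty, and F is not of type 6 (it does not contain vertices from all four sides of the grid perimeter). Then |F| ≤ |δ(F)|². -/
open Finset

lemma gridAdj {n : ℕ} {u v : Fin n × Fin n} :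
    (gridGraph n).Adj u v ↔ ((u.1 = v.1 ∧ Nat.dist u.2.val v.2.val = 1) ∨
    (u.2 = v.2 ∧ Nat.dist u.1.val v.1.val = 1)) := Iff.rfl
lemma card_le_of_exists {α β : Type*} [DecidableEq β] [Inhabited β]
    (s : Finset α) (B : Finset β) (Φ : α → β → Prop)
    (h : ∀ x ∈ s, ∃ e ∈ B, Φ x e)
    (hΦ : ∀ x x' e, Φ x e → Φ x' e → x = x') : s.card ≤ B.card := by
  choose! f hf hp using h
  exact Finset.card_le_card_of_injOn f hf
    (fun a ha b hb hab => hΦ a b (f a) (hp a ha) (hab ▸ hp b hb))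

lemma ndist (a b : ℕ) : Nat.dist a b = a - b + (b - a) := rfl

lemma exists_step (P : ℕ → Prop) :
    ∀ k a b : ℕ, Nat.dist a b ≤ k → P a → ¬ P b →
    ∃ c d : ℕ, c ≤ max a b ∧ d ≤ max a b ∧ P c ∧ ¬ P d ∧ Nat.dist c d = 1 := by
  intro k
  induction k with
  | zero =>
    intro a b hd ha hb
    have : a = b := by have h := ndist a b; omega
    exact absurd (this ▸ ha) hb
  | succ k ih =>
    intro a b hd ha hb
    have hab : a ≠ b := fun h => hb (h ▸ ha)
    rcases Nat.lt_or_ge a b with hlt | hge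
    · by_cases h1 : P (a + 1)
      · obtain ⟨c, d, hc, hdd, hPc, hPd, h1d⟩ := ih (a+1) b
          (by have := ndist a b; have := ndist (a+1) b; omega) h1 hb
        exact ⟨c, d, by omega, by omega, hPc, hPd, h1d⟩
      · exact ⟨a, a+1, by omega, by omega, ha, h1, by have := ndist a (a+1); omega⟩
    · have hlt : b < a := by omega
      by_cases h1 : P (a - 1)
      · obtain ⟨c, d, hc, hdd, hPc, hPd, h1d⟩ := ih (a-1) b
          (by have := ndist a b; have := ndist (a-1) b; omega) h1 hb
        exact ⟨c, d, by omega, by omega, hPc, hPd, h1d⟩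
      · exact ⟨a, a-1, by omega, by omega, ha, h1, by have := ndist a (a-1); omega⟩

lemma snd_card_le (n : ℕ) (F : Finset (Fin n × Fin n))
    (hmiss : ∀ v ∈ F, v.1.val ≠ n - 1) :
    (F.image Prod.snd).card ≤ (bdry (gridGraph n) F).card := by
  rcases F.eq_empty_or_nonempty with rfl | ⟨v0, hv0⟩
  · simp
  have : Inhabited (Sym2 (Fin n × Fin n)) := ⟨s(v0, v0)⟩
  apply card_le_of_exists _ _ (fun y e => ∃ c d : Fin n, e = s((c, y), (d, y)))
  · intro y hy
    set T := (F.filter (fun v => v.2 = y)).image (fun v => v.1.val) with hT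
    have hTne : T.Nonempty := by
      obtain ⟨v, hv, hvy⟩ := Finset.mem_image.mp hy
      exact ⟨v.1.val, Finset.mem_image.mpr ⟨v, Finset.mem_filter.mpr ⟨hv, hvy⟩, rfl⟩⟩
    set m := T.max' hTne with hm
    obtain ⟨v, hvf, hvm⟩ := Finset.mem_image.mp (T.max'_mem hTne)
    have hvF : v ∈ F := (Finset.mem_filter.mp hvf).1
    have hvy : v.2 = y := (Finset.mem_filter.mp hvf).2
    have hv1 : v.1.val = m := by rw [hm, hvm]
    have hmn : m < n := hv1 ▸ v.1.isLt
    have hmne : m ≠ n - 1 := hv1 ▸ hmiss v hvF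
    have hm1 : m + 1 < n := by omega
    refine ⟨s(v, (⟨m+1, hm1⟩, y)), ?_, v.1, ⟨m+1, hm1⟩, by rw [← hvy]⟩
    have hw : ((⟨m+1, hm1⟩ : Fin n), y) ∉ F := by
      intro hw
      have h1 : m + 1 ∈ T := Finset.mem_image.mpr ⟨_, Finset.mem_filter.mpr ⟨hw, rfl⟩, rfl⟩
      have := T.le_max' _ h1
      omega
    have hadj : (gridGraph n).Adj v (⟨m+1, hm1⟩, y) :=
      gridAdj.mpr (Or.inr ⟨hvy, by show Nat.dist v.1.val (m+1) = 1; have := ndist v.1.val (m+1); omega⟩)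
    exact Finset.mem_filter.mpr ⟨SimpleGraph.mem_edgeFinset.mpr hadj, v, _, rfl, hvF, hw⟩
  · rintro y y' e ⟨c, d, rfl⟩ ⟨c', d', he⟩
    rw [Sym2.eq_iff] at he
    rcases he with ⟨h1, _⟩ | ⟨h1, _⟩ <;> exact (congrArg Prod.snd h1)

lemma fst_card_le (n : ℕ) (F : Finset (Fin n × Fin n))
    (hproper : ∀ x ∈ F.image Prod.fst, ∃ y : Fin n, (x, y) ∉ F) :
    (F.image Prod.fst).card ≤ (bdry (gridGraph n) F).card := by
  rcases F.eq_empty_or_nonempty with rfl | ⟨v0, hv0⟩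
  · simp
  have : Inhabited (Sym2 (Fin n × Fin n)) := ⟨s(v0, v0)⟩
  apply card_le_of_exists _ _ (fun x e => ∃ c d : Fin n, e = s((x, c), (x, d)))
  · intro x hx
    obtain ⟨v, hvF, hvx⟩ := Finset.mem_image.mp hx
    obtain ⟨b, hbF⟩ := hproper x hx
    set P : ℕ → Prop := fun k => ∃ h : k < n, (x, ⟨k, h⟩) ∈ F with hP
    have hPa : P v.2.val := ⟨v.2.isLt, by rwa [← hvx, Fin.eta, Prod.mk.eta]⟩
    have hPb : ¬ P b.val := fun ⟨h, hmem⟩ => hbF (by rwa [Fin.eta] at hmem)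
    obtain ⟨c, d, hc, hd, hPc, hPd, hdist⟩ :=
      exists_step P (Nat.dist v.2.val b.val) _ _ le_rfl hPa hPb
    have hmax : max v.2.val b.val < n := max_lt v.2.isLt b.isLt
    have hcn : c < n := by omega
    have hdn : d < n := by omega
    obtain ⟨h', hcF⟩ := hPc
    have hdF : (x, (⟨d, hdn⟩ : Fin n)) ∉ F := fun h => hPd ⟨hdn, h⟩
    refine ⟨s((x, ⟨c, hcn⟩), (x, ⟨d, hdn⟩)), ?_, _, _, rfl⟩
    have hadj : (gridGraph n).Adj (x, ⟨c, hcn⟩) (x, ⟨d, hdn⟩) :=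
      gridAdj.mpr (Or.inl ⟨rfl, hdist⟩)
    exact Finset.mem_filter.mpr ⟨SimpleGraph.mem_edgeFinset.mpr hadj, _, _, rfl, hcF, hdF⟩
  · rintro x x' e ⟨c, d, rfl⟩ ⟨c', d', he⟩
    rw [Sym2.eq_iff] at he
    rcases he with ⟨h1, _⟩ | ⟨h1, _⟩ <;> exact (congrArg Prod.fst h1)

lemma core (n : ℕ) (F : Finset (Fin n × Fin n))
    (hmiss : ∀ v ∈ F, v.1.val ≠ n - 1) :
    F.card ≤ (bdry (gridGraph n) F).card ^ 2 := by
  set B := (bdry (gridGraph n) F).card with hB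
  have hC : (F.image Prod.snd).card ≤ B := snd_card_le n F hmiss
  have hR : (F.image Prod.fst).card ≤ B := by
    by_cases hfull : ∀ x ∈ F.image Prod.fst, ∃ y : Fin n, (x, y) ∉ F
    · exact fst_card_le n F hfull
    · push_neg at hfull
      obtain ⟨x, hx, hall⟩ := hfull
      have hCn : (F.image Prod.snd) = Finset.univ := by
        apply Finset.eq_univ_of_forall
        intro y
        exact Finset.mem_image.mpr ⟨(x, y), hall y, rfl⟩
      calc (F.image Prod.fst).card ≤ Fintype.card (Fin n) := Finset.card_le_univ _
        _ = (F.image Prod.snd).card := by rw [hCn]; simp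
        _ ≤ B := hC
  have hsub : F ⊆ (F.image Prod.fst) ×ˢ (F.image Prod.snd) := by
    intro v hv
    exact Finset.mem_product.mpr ⟨Finset.mem_image_of_mem _ hv, Finset.mem_image_of_mem _ hv⟩
  calc F.card ≤ ((F.image Prod.fst) ×ˢ (F.image Prod.snd)).card := Finset.card_le_card hsub
    _ = (F.image Prod.fst).card * (F.image Prod.snd).card := Finset.card_product _ _
    _ ≤ B * B := Nat.mul_le_mul hR hC
    _ = B ^ 2 := (sq B).symm

lemma bdry_card_le_image (n : ℕ) (σ : (Fin n × Fin n) ≃ (Fin n × Fin n))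
    (hσ : ∀ u v, (gridGraph n).Adj u v → (gridGraph n).Adj (σ u) (σ v))
    (F : Finset (Fin n × Fin n)) :
    (bdry (gridGraph n) F).card ≤ (bdry (gridGraph n) (F.image σ)).card := by
  apply Finset.card_le_card_of_injOn (Sym2.map σ)
  · intro e he
    obtain ⟨heE, u, v, rfl, huF, hvF⟩ := Finset.mem_filter.mp he
    have hadj : (gridGraph n).Adj u v := by
      rwa [SimpleGraph.mem_edgeFinset, SimpleGraph.mem_edgeSet] at heE
    refine Finset.mem_filter.mpr
      ⟨SimpleGraph.mem_edgeFinset.mpr (hσ u v hadj), σ u, σ v, by rw [Sym2.map_pair_eq],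
        Finset.mem_image_of_mem _ huF, ?_⟩
    intro h
    obtain ⟨w, hwF, hw⟩ := Finset.mem_image.mp h
    exact hvF (σ.injective hw ▸ hwF)
  · exact fun a _ b _ h => Sym2.map.injective σ.injective h

lemma bdry_card_image_eq (n : ℕ) (σ : (Fin n × Fin n) ≃ (Fin n × Fin n))
    (hσ : ∀ u v, (gridGraph n).Adj u v ↔ (gridGraph n).Adj (σ u) (σ v))
    (F : Finset (Fin n × Fin n)) :
    (bdry (gridGraph n) (F.image σ)).card = (bdry (gridGraph n) F).card := by
  apply le_antisymm
  · have h := bdry_card_le_image n σ.symm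
      (fun u v hadj => (hσ (σ.symm u) (σ.symm v)).mpr (by simpa using hadj)) (F.image σ)
    rwa [Finset.image_image, show (⇑σ.symm ∘ ⇑σ) = id by funext x; simp, Finset.image_id] at h
  · exact bdry_card_le_image n σ (fun u v => (hσ u v).mp) F

lemma transfer (n : ℕ) (F : Finset (Fin n × Fin n)) (σ : (Fin n × Fin n) ≃ (Fin n × Fin n))
    (hσ : ∀ u v, (gridGraph n).Adj u v ↔ (gridGraph n).Adj (σ u) (σ v))
    (hmiss : ∀ v ∈ F, ((σ v).1).val ≠ n - 1) :
    F.card ≤ (bdry (gridGraph n) F).card ^ 2 := by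
  have h1 : F.card = (F.image σ).card := (Finset.card_image_of_injective F σ.injective).symm
  have h2 := bdry_card_image_eq n σ hσ F
  have h3 := core n (F.image σ) (by
    rintro v' hv'
    obtain ⟨v, hv, rfl⟩ := Finset.mem_image.mp hv'
    exact hmiss v hv)
  rw [h1, ← h2]
  exact h3

def rho (n : ℕ) : (Fin n × Fin n) ≃ (Fin n × Fin n) where
  toFun v := (⟨n - 1 - v.1.val, by omega⟩, v.2)
  invFun v := (⟨n - 1 - v.1.val, by omega⟩, v.2)
  left_inv v := by
    rcases v with ⟨x, y⟩
    apply Prod.ext <;> simp [Fin.ext_iff] <;> omega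
  right_inv v := by
    rcases v with ⟨x, y⟩
    apply Prod.ext <;> simp [Fin.ext_iff] <;> omega

def sw (n : ℕ) : (Fin n × Fin n) ≃ (Fin n × Fin n) where
  toFun v := (v.2, v.1)
  invFun v := (v.2, v.1)
  left_inv v := rfl
  right_inv v := rfl

lemma rho_adj (n : ℕ) (u v : Fin n × Fin n) :
    (gridGraph n).Adj u v ↔ (gridGraph n).Adj (rho n u) (rho n v) := by
  rcases u with ⟨a, b⟩; rcases v with ⟨c, d⟩
  simp only [gridAdj, rho, Equiv.coe_fn_mk, Fin.ext_iff, ndist]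
  omega

lemma sw_adj (n : ℕ) (u v : Fin n × Fin n) :
    (gridGraph n).Adj u v ↔ (gridGraph n).Adj (sw n u) (sw n v) := by
  rcases u with ⟨a, b⟩; rcases v with ⟨c, d⟩
  simp only [gridAdj, sw, Equiv.coe_fn_mk]
  exact or_comm


/-- a nonempty set `F` with `G[F]` connected, `G[V∖F]` connected and
nonempty, and `F` not of type 6, satisfies `|F| ≤ |δ(F)|²`. -/
theorem area_le_boundary_sq (n : ℕ) (F : Finset (Fin n × Fin n))
    (hne : F.Nonempty)
    (hconn : ((gridGraph n).induce (F : Set (Fin n × Fin n))).Connected)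
    (hconnc : ((gridGraph n).induce ((↑F : Set (Fin n × Fin n))ᶜ)).Connected)
    (hcne : Fᶜ.Nonempty)
    (hno6 : ¬ Type6 n F) :
    F.card ≤ (bdry (gridGraph n) F).card ^ 2 := by
  by_cases h2 : ∃ v ∈ F, v.1.val = n - 1
  · by_cases h1 : ∃ v ∈ F, v.1.val = 0
    · by_cases h4 : ∃ v ∈ F, v.2.val = n - 1
      · by_cases h3 : ∃ v ∈ F, v.2.val = 0
        · exact absurd ⟨h1, h2, h3, h4⟩ hno6
        · push_neg at h3
          refine transfer n F ((sw n).trans (rho n))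
            (fun u v => (sw_adj n u v).trans (rho_adj n _ _)) ?_
          intro v hv
          have := h3 v hv
          have hlt := v.2.isLt
          simp only [Equiv.trans_apply, sw, rho, Equiv.coe_fn_mk]
          omega
      · push_neg at h4
        refine transfer n F (sw n) (sw_adj n) ?_
        intro v hv
        exact h4 v hv
    · push_neg at h1
      refine transfer n F (rho n) (rho_adj n) ?_
      intro v hv
      have := h1 v hv
      have hlt := v.1.isLt
      simp only [rho, Equiv.coe_fn_mk]
      omega
  · push_neg at h2
    exact core n F h2
end

section
/- Let F ⊆ V be a nonempty subset of the n×n grid graph such that G[F] is connected, G[V∖F] is connected and nonempty, and F contains no vertex of the grid perimeter (a type-1 set). Then |δ(F)| is even and |δ(F)| ≥ 4; in particular there is no such F with |δ(F)| odd or |δ(F)| = 2. -/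
open Finset

lemma grid_adj {n : ℕ} (u v : Fin n × Fin n) :
    (gridGraph n).Adj u v ↔ ((u.1 = v.1 ∧ Nat.dist u.2.val v.2.val = 1) ∨
      (u.2 = v.2 ∧ Nat.dist u.1.val v.1.val = 1)) := Iff.rfl

def gkey {n : ℕ} (v : Fin n × Fin n) : ℕ ×ₗ ℕ := toLex (v.1.val, v.2.val)

lemma gkey_inj {n : ℕ} {u v : Fin n × Fin n} (h : gkey u = gkey v) : u = v := by
  unfold gkey at h
  rw [toLex_inj, Prod.mk.injEq] at h
  exact Prod.ext (Fin.ext h.1) (Fin.ext h.2)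

lemma nbhd {n : ℕ} (u : Fin n × Fin n) (hx0 : u.1.val ≠ 0) (hx1 : u.1.val ≠ n-1)
    (hy0 : u.2.val ≠ 0) (hy1 : u.2.val ≠ n-1) :
    ∃ l r d t : Fin n × Fin n,
      (univ.filter fun v => (gridGraph n).Adj u v) = {l, r, d, t} ∧
      ({l, r, d, t} : Finset (Fin n × Fin n)).card = 4 ∧
      gkey l < gkey u ∧ gkey d < gkey u ∧ gkey u < gkey r ∧ gkey u < gkey t ∧
      l ≠ d ∧ r ≠ t := by
  have hx := u.1.isLt
  have hy := u.2.isLt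
  refine ⟨(⟨u.1.val - 1, by omega⟩, u.2), (⟨u.1.val + 1, by omega⟩, u.2),
    (u.1, ⟨u.2.val - 1, by omega⟩), (u.1, ⟨u.2.val + 1, by omega⟩),
    ?_, ?_, ?_, ?_, ?_, ?_, ?_, ?_⟩
  · ext v
    have hv1 := v.1.isLt
    have hv2 := v.2.isLt
    simp only [mem_filter, mem_univ, true_and, grid_adj, Nat.dist, mem_insert, mem_singleton,
      Prod.ext_iff, Fin.ext_iff]
    omega
  · rw [card_insert_of_notMem, card_insert_of_notMem, card_insert_of_notMem, card_singleton]
    · simp only [mem_singleton, Prod.ext_iff, Fin.ext_iff]; omega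
    · simp only [mem_insert, mem_singleton, Prod.ext_iff, Fin.ext_iff]; omega
    · simp only [mem_insert, mem_singleton, Prod.ext_iff, Fin.ext_iff]; omega
  all_goals (simp only [gkey, Prod.Lex.lt_iff, ofLex_toLex, Fin.val_mk, true_and, and_true, Ne,
    Prod.ext_iff, Fin.ext_iff, not_and]; omega)

lemma fiber_eq {n : ℕ} (F S : Finset (Fin n × Fin n)) (u : Fin n × Fin n) (hu : u ∈ F) :
    (((F ×ˢ S).filter fun p => (gridGraph n).Adj p.1 p.2).filter fun p => p.1 = u)
      = (S.filter fun v => (gridGraph n).Adj u v).image fun v => (u, v) := by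
  ext ⟨a, b⟩
  simp only [mem_filter, mem_product, mem_image, Prod.mk.injEq]
  constructor
  · rintro ⟨⟨⟨ha, hb⟩, hadj⟩, rfl⟩
    exact ⟨b, ⟨hb, hadj⟩, rfl, rfl⟩
  · rintro ⟨v, ⟨hv, hadj⟩, rfl, rfl⟩
    exact ⟨⟨⟨hu, hv⟩, hadj⟩, rfl⟩

lemma card_adjP {n : ℕ} (F S : Finset (Fin n × Fin n)) :
    ((F ×ˢ S).filter fun p => (gridGraph n).Adj p.1 p.2).card
      = ∑ u ∈ F, (S.filter fun v => (gridGraph n).Adj u v).card := by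
  rw [card_eq_sum_card_fiberwise (f := Prod.fst) (t := F)
    (fun p hp => (mem_product.mp (mem_filter.mp hp).1).1)]
  refine sum_congr rfl fun u hu => ?_
  rw [fiber_eq F S u hu, card_image_of_injective _ (fun x y h => (Prod.ext_iff.mp h).2)]

lemma bdry_card {n : ℕ} (F : Finset (Fin n × Fin n)) :
    (bdry (gridGraph n) F).card
      = ∑ u ∈ F, (Fᶜ.filter fun v => (gridGraph n).Adj u v).card := by
  rw [← card_adjP]
  have h1 : bdry (gridGraph n) F
      = ((F ×ˢ Fᶜ).filter fun p => (gridGraph n).Adj p.1 p.2).image fun p => s(p.1, p.2) := by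
    ext e
    simp only [bdry, mem_filter, mem_image, mem_product, mem_compl,
      SimpleGraph.mem_edgeFinset]
    constructor
    · rintro ⟨he, u, v, rfl, hu, hv⟩
      exact ⟨(u, v), ⟨⟨hu, hv⟩, ((gridGraph n).mem_edgeSet).mp he⟩, rfl⟩
    · rintro ⟨⟨a, b⟩, ⟨⟨ha, hb⟩, hadj⟩, rfl⟩
      exact ⟨((gridGraph n).mem_edgeSet).mpr hadj, a, b, rfl, ha, hb⟩
  rw [h1, card_image_of_injOn]
  rintro ⟨a, b⟩ hab ⟨c, d⟩ hcd h
  simp only [mem_coe, mem_filter, mem_product, mem_compl] at hab hcd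
  rcases Sym2.eq_iff.mp h with ⟨rfl, rfl⟩ | ⟨rfl, rfl⟩
  · rfl
  · exact absurd hab.1.1 hcd.1.2

lemma even_inner {n : ℕ} (F : Finset (Fin n × Fin n)) :
    Even ((F ×ˢ F).filter fun p => (gridGraph n).Adj p.1 p.2).card := by
  set T := (F ×ˢ F).filter fun p => (gridGraph n).Adj p.1 p.2 with hT
  set L := T.filter fun p => gkey p.1 < gkey p.2 with hL
  set R := T.filter fun p => gkey p.2 < gkey p.1 with hR
  have himg : R = L.image Prod.swap := by
    ext ⟨a, b⟩
    constructor
    · intro h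
      have h1 := mem_filter.mp h
      have h2 := mem_filter.mp h1.1
      have h3 := mem_product.mp h2.1
      refine mem_image.mpr ⟨(b, a), ?_, rfl⟩
      exact mem_filter.mpr ⟨mem_filter.mpr ⟨mem_product.mpr ⟨h3.2, h3.1⟩,
        (gridGraph n).adj_symm h2.2⟩, h1.2⟩
    · intro h
      obtain ⟨⟨c, d⟩, hcd, heq⟩ := mem_image.mp h
      obtain ⟨rfl, rfl⟩ : d = a ∧ c = b := by simpa [Prod.ext_iff, and_comm] using heq
      have h1 := mem_filter.mp hcd
      have h2 := mem_filter.mp h1.1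
      have h3 := mem_product.mp h2.1
      exact mem_filter.mpr ⟨mem_filter.mpr ⟨mem_product.mpr ⟨h3.2, h3.1⟩,
        (gridGraph n).adj_symm h2.2⟩, h1.2⟩
  have hunion : T = L ∪ R := by
    ext p
    simp only [hL, hR, mem_union, mem_filter]
    constructor
    · intro hp
      rcases lt_trichotomy (gkey p.1) (gkey p.2) with h | h | h
      · exact Or.inl ⟨hp, h⟩
      · exact absurd ((gridGraph n).ne_of_adj (mem_filter.mp hp).2) (fun hne => hne (gkey_inj h))
      · exact Or.inr ⟨hp, h⟩
    · rintro (⟨hp, _⟩ | ⟨hp, _⟩) <;> exact hp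
  have hdisj : Disjoint L R := by
    rw [disjoint_left]
    rintro p hpL hpR
    exact absurd ((mem_filter.mp hpL).2.trans (mem_filter.mp hpR).2) (lt_irrefl _)
  rw [hunion, card_union_of_disjoint hdisj, himg,
    card_image_of_injective _ Prod.swap_injective]
  exact ⟨L.card, rfl⟩


/-- for a nonempty type-1 set `F` (with `G[F]` connected, `G[V∖F]` connected
and nonempty, and `F` containing no perimeter vertex), the boundary size `|δ(F)|` is even
and at least `4`; in particular it is neither odd nor equal to `2`. -/
theorem type1_boundary_even_and_ge_four (n : ℕ) (F : Finset (Fin n × Fin n))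
    (hne : F.Nonempty)
    (hconn : ((gridGraph n).induce (F : Set (Fin n × Fin n))).Connected)
    (hconnc : ((gridGraph n).induce ((↑F : Set (Fin n × Fin n))ᶜ)).Connected)
    (hcne : Fᶜ.Nonempty)
    (hper : ∀ v ∈ F, v.1.val ≠ 0 ∧ v.1.val ≠ n - 1 ∧ v.2.val ≠ 0 ∧ v.2.val ≠ n - 1) :
    Even (bdry (gridGraph n) F).card ∧ 4 ≤ (bdry (gridGraph n) F).card := by
  classical
  have hsplit : ∀ u ∈ F,
      (F.filter fun v => (gridGraph n).Adj u v).card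
        + (Fᶜ.filter fun v => (gridGraph n).Adj u v).card = 4 := by
    intro u hu
    obtain ⟨hx0, hx1, hy0, hy1⟩ := hper u hu
    obtain ⟨l, r, d, t, hset, hcard, -⟩ := nbhd u hx0 hx1 hy0 hy1
    have h1 : F.filter (fun v => (gridGraph n).Adj u v)
        = (univ.filter fun v => (gridGraph n).Adj u v).filter (· ∈ F) := by
      ext v; simp [and_comm]
    have h2 : Fᶜ.filter (fun v => (gridGraph n).Adj u v)
        = (univ.filter fun v => (gridGraph n).Adj u v).filter (fun v => ¬ v ∈ F) := by
      ext v; simp [and_comm]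
    rw [h1, h2, card_filter_add_card_filter_not, hset, hcard]
  have hkey1 := bdry_card F
  have htot : ∑ u ∈ F, (F.filter fun v => (gridGraph n).Adj u v).card
      + ∑ u ∈ F, (Fᶜ.filter fun v => (gridGraph n).Adj u v).card = 4 * F.card := by
    rw [← sum_add_distrib, Finset.sum_congr rfl hsplit, sum_const, smul_eq_mul, mul_comm]
  have heven := even_inner F
  rw [card_adjP F F] at heven
  constructor
  · obtain ⟨k, hk⟩ := heven
    exact ⟨2 * F.card - k, by omega⟩
  · obtain ⟨u0, hu0F, hmin⟩ := F.exists_min_image gkey hne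
    obtain ⟨u1, hu1F, hmax⟩ := F.exists_max_image gkey hne
    obtain ⟨hx0, hx1, hy0, hy1⟩ := hper u0 hu0F
    obtain ⟨l, r, d, t, hset, hcard, hl, hd, hr, ht, hld, hrt⟩ := nbhd u0 hx0 hx1 hy0 hy1
    have hadj : ∀ w ∈ ({l, r, d, t} : Finset (Fin n × Fin n)), (gridGraph n).Adj u0 w :=
      fun w hw => (mem_filter.mp (hset ▸ hw)).2
    have hlF : l ∉ F := fun hlF => absurd (hmin l hlF) (not_le.mpr hl)
    have hdF : d ∉ F := fun hdF => absurd (hmin d hdF) (not_le.mpr hd)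
    by_cases h01 : u0 = u1
    · subst h01
      have hrF : r ∉ F := fun hrF => absurd (hmax r hrF) (not_le.mpr hr)
      have htF : t ∉ F := fun htF => absurd (hmax t htF) (not_le.mpr ht)
      have hsub : ({l, r, d, t} : Finset (Fin n × Fin n))
          ⊆ Fᶜ.filter fun v => (gridGraph n).Adj u0 v := by
        intro w hw
        have hadjw := hadj w hw
        simp only [mem_insert, mem_singleton] at hw
        rcases hw with rfl | rfl | rfl | rfl
        · exact mem_filter.mpr ⟨mem_compl.mpr hlF, hadjw⟩
        · exact mem_filter.mpr ⟨mem_compl.mpr hrF, hadjw⟩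
        · exact mem_filter.mpr ⟨mem_compl.mpr hdF, hadjw⟩
        · exact mem_filter.mpr ⟨mem_compl.mpr htF, hadjw⟩
      have h4 : 4 ≤ (Fᶜ.filter fun v => (gridGraph n).Adj u0 v).card :=
        hcard ▸ card_le_card hsub
      have hle : (Fᶜ.filter fun v => (gridGraph n).Adj u0 v).card
          ≤ ∑ u ∈ F, (Fᶜ.filter fun v => (gridGraph n).Adj u v).card :=
        single_le_sum (f := fun u => (Fᶜ.filter fun v => (gridGraph n).Adj u v).card)
          (fun i _ => Nat.zero_le _) hu0F
      omega
    · obtain ⟨hx0', hx1', hy0', hy1'⟩ := hper u1 hu1F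
      obtain ⟨l', r', d', t', hset', hcard', hl', hd', hr', ht', hld', hrt'⟩ :=
        nbhd u1 hx0' hx1' hy0' hy1'
      have hadj' : ∀ w ∈ ({l', r', d', t'} : Finset (Fin n × Fin n)), (gridGraph n).Adj u1 w :=
        fun w hw => (mem_filter.mp (hset' ▸ hw)).2
      have hrF : r' ∉ F := fun hrF => absurd (hmax r' hrF) (not_le.mpr hr')
      have htF : t' ∉ F := fun htF => absurd (hmax t' htF) (not_le.mpr ht')
      have hc0 : 2 ≤ (Fᶜ.filter fun v => (gridGraph n).Adj u0 v).card := by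
        have hsub : ({l, d} : Finset (Fin n × Fin n))
            ⊆ Fᶜ.filter fun v => (gridGraph n).Adj u0 v := by
          intro w hw
          simp only [mem_insert, mem_singleton] at hw
          rcases hw with rfl | rfl
          · exact mem_filter.mpr ⟨mem_compl.mpr hlF, hadj _ (by simp)⟩
          · exact mem_filter.mpr ⟨mem_compl.mpr hdF, hadj _ (by simp)⟩
        have : ({l, d} : Finset (Fin n × Fin n)).card = 2 := by
          rw [card_insert_of_notMem (notMem_singleton.mpr hld), card_singleton]
        exact this ▸ card_le_card hsub
      have hc1 : 2 ≤ (Fᶜ.filter fun v => (gridGraph n).Adj u1 v).card := by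
        have hsub : ({r', t'} : Finset (Fin n × Fin n))
            ⊆ Fᶜ.filter fun v => (gridGraph n).Adj u1 v := by
          intro w hw
          simp only [mem_insert, mem_singleton] at hw
          rcases hw with rfl | rfl
          · exact mem_filter.mpr ⟨mem_compl.mpr hrF, hadj' _ (by simp)⟩
          · exact mem_filter.mpr ⟨mem_compl.mpr htF, hadj' _ (by simp)⟩
        have : ({r', t'} : Finset (Fin n × Fin n)).card = 2 := by
          rw [card_insert_of_notMem (notMem_singleton.mpr hrt'), card_singleton]
        exact this ▸ card_le_card hsub
      have hpair : (Fᶜ.filter fun v => (gridGraph n).Adj u0 v).card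
          + (Fᶜ.filter fun v => (gridGraph n).Adj u1 v).card
          ≤ ∑ u ∈ F, (Fᶜ.filter fun v => (gridGraph n).Adj u v).card := by
        have hsub : ({u0, u1} : Finset (Fin n × Fin n)) ⊆ F :=
          insert_subset_iff.mpr ⟨hu0F, singleton_subset_iff.mpr hu1F⟩
        calc (Fᶜ.filter fun v => (gridGraph n).Adj u0 v).card
              + (Fᶜ.filter fun v => (gridGraph n).Adj u1 v).card
            = ∑ u ∈ ({u0, u1} : Finset (Fin n × Fin n)),
                (Fᶜ.filter fun v => (gridGraph n).Adj u v).card := by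
              rw [sum_insert (notMem_singleton.mpr h01), sum_singleton]
          _ ≤ _ := sum_le_sum_of_subset hsub
      omega
end
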